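/- Let G be a group generated by a subgroup H and a normal subgroup N. Let F_N ⊆ ℓ^∞(N) be a left N-invariant subspace containing the constants, and F_G ⊆ ℓ^∞(G) a left G-invariant subspace containing the constants such that the restriction f↾_N lies in F_N for every f ∈ F_G. Suppose there exists a left H-invariant bounded functional m_H on ℓ^∞(H) with m_H(1) = 1, and a left N-invariant bounded functional m_N on F_N with m_N(1) = 1. Then there exists a left G-invariant bounded functional m_G on F_G with m_G(1) = 1. -/

import Mathlib

open BoundedContinuousFunction

/-- The continuous map `n ↦ g₀ * n` from `N` to `G`. -/
private def transMapN {G : Type*} [Group G] [TopologicalSpace G] [DiscreteTopology G]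
    (N : Subgroup G) (g₀ : G) : C(↥N, G) :=
  ⟨fun n => g₀ * (n : G), continuous_of_discreteTopology⟩

/-- if `G` is generated by a subgroup `H` and a normal subgroup `N`,
`F_N ⊆ ℓ^∞(N)` and `F_G ⊆ ℓ^∞(G)` are left invariant subspaces containing the constants
with restrictions to `N` of members of `F_G` lying in `F_N`, and there are left invariant
normalised bounded functionals `m_H` on `ℓ^∞(H)` and `m_N` on `F_N`, then there is a left
`G`-invariant bounded functional `m_G` on `F_G` with `m_G(1) = 1`. -/
theorem stmt3 {G : Type*} [Group G] [TopologicalSpace G] [DiscreteTopology G]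
    (H N : Subgroup G) (hNnormal : N.Normal) (hgen : H ⊔ N = ⊤)
    (FN : Submodule ℂ (↥N →ᵇ ℂ)) (FG : Submodule ℂ (G →ᵇ ℂ))
    (hFNconst : ∀ f : ↥N →ᵇ ℂ, (∃ c : ℂ, ∀ n : N, f n = c) → f ∈ FN)
    (hFNinv : ∀ f ∈ FN, ∀ n₀ : N, ∀ f' : ↥N →ᵇ ℂ,
      (∀ n : N, f' n = f (n₀ * n)) → f' ∈ FN)
    (hFGconst : ∀ f : G →ᵇ ℂ, (∃ c : ℂ, ∀ g : G, f g = c) → f ∈ FG)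
    (hFGinv : ∀ f ∈ FG, ∀ g₀ : G, ∀ f' : G →ᵇ ℂ,
      (∀ g : G, f' g = f (g₀ * g)) → f' ∈ FG)
    (hrestr : ∀ f ∈ FG, ∀ fN : ↥N →ᵇ ℂ, (∀ n : N, fN n = f ↑n) → fN ∈ FN)
    (mH : (↥H →ᵇ ℂ) →L[ℂ] ℂ)
    (hmH1 : mH 1 = 1)
    (hmHinv : ∀ (h₀ : H) (f f' : ↥H →ᵇ ℂ),
      (∀ h : H, f' h = f (h₀ * h)) → mH f' = mH f)
    (mN : ↥FN →L[ℂ] ℂ)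
    (hmN1 : ∀ f : ↥FN, (∀ n : N, (↑f : ↥N →ᵇ ℂ) n = 1) → mN f = 1)
    (hmNinv : ∀ (n₀ : N) (f f' : ↥FN),
      (∀ n : N, (↑f' : ↥N →ᵇ ℂ) n = (↑f : ↥N →ᵇ ℂ) (n₀ * n)) → mN f' = mN f) :
    ∃ mG : ↥FG →L[ℂ] ℂ,
      (∀ f : ↥FG, (∀ g : G, (↑f : G →ᵇ ℂ) g = 1) → mG f = 1) ∧
      (∀ (g₀ : G) (f f' : ↥FG),
        (∀ g : G, (↑f' : G →ᵇ ℂ) g = (↑f : G →ᵇ ℂ) (g₀ * g)) → mG f' = mG f) := by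
  classical
  -- the translated restriction of a member of `FG` lies in `FN`
  have key : ∀ (f : ↥FG) (g₀ : G),
      ((f : G →ᵇ ℂ).compContinuous (transMapN N g₀)) ∈ FN := by
    intro f g₀
    have h1 : ((f : G →ᵇ ℂ).compContinuous
        ⟨fun g : G => g₀ * g, continuous_of_discreteTopology⟩) ∈ FG :=
      hFGinv _ f.2 g₀ _ (fun g => rfl)
    exact hrestr _ h1 _ (fun n => rfl)
  -- `ρ g₀ f = (n ↦ f (g₀ n))` as a linear map `FG → FN`
  let ρ : G → (↥FG →ₗ[ℂ] ↥FN) := fun g₀ =>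
    { toFun := fun f => ⟨(f : G →ᵇ ℂ).compContinuous (transMapN N g₀), key f g₀⟩
      map_add' := by intro f f'; apply Subtype.ext; ext n; simp
      map_smul' := by intro c f; apply Subtype.ext; ext n; simp }
  have hρapp : ∀ (g₀ : G) (f : ↥FG) (n : ↥N),
      ((ρ g₀ f : ↥N →ᵇ ℂ)) n = (f : G →ᵇ ℂ) (g₀ * n) := fun _ _ _ => rfl
  have hρ_norm : ∀ (g₀ : G) (f : ↥FG), ‖ρ g₀ f‖ ≤ ‖f‖ := fun g₀ f =>
    BoundedContinuousFunction.norm_compContinuous_le _ _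
  -- `Φ f = (h ↦ mN (ρ h f))` as a linear map `FG → ℓ^∞(H)`
  let Φ : ↥FG →ₗ[ℂ] (↥H →ᵇ ℂ) :=
    { toFun := fun f => BoundedContinuousFunction.ofNormedAddCommGroup
        (fun h : ↥H => mN (ρ (h : G) f)) continuous_of_discreteTopology (‖mN‖ * ‖f‖)
        (fun h => by
          calc ‖mN (ρ (h : G) f)‖ ≤ ‖mN‖ * ‖ρ (h : G) f‖ := mN.le_opNorm _
          _ ≤ ‖mN‖ * ‖f‖ :=
            mul_le_mul_of_nonneg_left (hρ_norm _ _) (ContinuousLinearMap.opNorm_nonneg mN))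
      map_add' := by
        intro f f'; ext h
        show mN (ρ (h : G) (f + f')) = mN (ρ (h : G) f) + mN (ρ (h : G) f')
        rw [map_add, map_add]
      map_smul' := by
        intro c f; ext h
        show mN (ρ (h : G) (c • f)) = c • mN (ρ (h : G) f)
        rw [map_smul, map_smul] }
  have hΦapp : ∀ (f : ↥FG) (h : ↥H), Φ f h = mN (ρ (h : G) f) := fun _ _ => rfl
  have hΦbound : ∀ f : ↥FG, ‖Φ f‖ ≤ ‖mN‖ * ‖f‖ := fun f =>
    BoundedContinuousFunction.norm_ofNormedAddCommGroup_le _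
      (mul_nonneg (ContinuousLinearMap.opNorm_nonneg mN) (norm_nonneg f))
      (fun h => (mN.le_opNorm _).trans
        (mul_le_mul_of_nonneg_left (hρ_norm _ _) (ContinuousLinearMap.opNorm_nonneg mN)))
  let Φc : ↥FG →L[ℂ] (↥H →ᵇ ℂ) := Φ.mkContinuous ‖mN‖ hΦbound
  refine ⟨mH.comp Φc, ?_, ?_⟩
  · intro f hf
    have h1 : Φ f = 1 := by
      ext h
      have h2 : mN (ρ (h : G) f) = 1 := hmN1 _ (fun n => by
        rw [hρapp]; exact hf _)
      simpa [hΦapp] using h2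
    show mH (Φ f) = 1
    rw [h1, hmH1]
  · intro g₀ f f' hff'
    have hg₀ : g₀ ∈ H ⊔ N := hgen ▸ Subgroup.mem_top g₀
    rw [← SetLike.mem_coe, Subgroup.mul_normal H N] at hg₀
    obtain ⟨h₀, hh₀, n₀, hn₀, hg₀eq⟩ := hg₀
    show mH (Φ f') = mH (Φ f)
    refine hmHinv ⟨h₀, hh₀⟩ (Φ f) (Φ f') (fun h => ?_)
    rw [hΦapp, hΦapp]
    -- conjugate of `n₀` by `h⁻¹`
    have hn₁ : (h : G)⁻¹ * n₀ * (h : G) ∈ N := by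
      simpa using hNnormal.conj_mem n₀ hn₀ (h : G)⁻¹
    refine hmNinv ⟨(h : G)⁻¹ * n₀ * (h : G), hn₁⟩ _ _ (fun n => ?_)
    rw [hρapp, hρapp, hff']
    congr 1
    push_cast
    rw [← hg₀eq]
    group
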